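/- Suppose that for each a ∈ (0,1) a measurable function w_a : (0,1] → ℝ is given satisfying, for all x ∈ (0,1]: (1−x²)/(1+x²) ≤ w_a(x) and w_a(x)² ≤ 1 − x^{2/√(1−a²)}. Then ∫₀¹ (1/x)·( w_a(x)/√(Δ_a(w_a(x))) + (x²−1)/(x²+1) )² dx tends to 2·ln 2 − 1 as a → 0⁺, where Δ_a(w) = (1−a²)·w² + a². -/

import Mathlib

open Filter Set intervalIntegral Real MeasureTheory

/-- The lower comparison integrand. -/
noncomputable def Lo (a x : ℝ) : ℝ :=
  (1/x) * ((1-x^2)/(1+x^2) / Real.sqrt ((1-a^2)*((1-x^2)/(1+x^2))^2 + a^2)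
    + (x^2-1)/(x^2+1))^2

lemma contB : Continuous (fun x : ℝ => 4*x^3/(1+x^2)^2) := by
  apply Continuous.div (by continuity) (by continuity)
  intro x; positivity

lemma intB : ∫ x in (0:ℝ)..1, 4*x^3/(1+x^2)^2 = 2 * Real.log 2 - 1 := by
  have h : ∀ x ∈ Set.uIcc (0:ℝ) 1, HasDerivAt (fun y => 2*Real.log (1+y^2) + 2/(1+y^2)) (4*x^3/(1+x^2)^2) x := by
    intro x hx
    have hx2 : (0:ℝ) < 1 + x^2 := by positivity
    have h1 : HasDerivAt (fun y : ℝ => 1 + y^2) (2*x) x := by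
      simpa using ((hasDerivAt_pow 2 x).const_add 1)
    have h2 : HasDerivAt (fun y : ℝ => 2*Real.log (1+y^2)) (2*((2*x)/(1+x^2))) x :=
      ((h1.log hx2.ne').const_mul 2)
    have h3 : HasDerivAt (fun y : ℝ => 2/(1+y^2)) (-(2*(2*x))/((1+x^2)^2)) x := by
      have := (hasDerivAt_const x (2:ℝ)).div h1 hx2.ne'
      exact this.congr_deriv (by ring)
    have := h2.add h3
    refine this.congr_deriv ?_
    rw [mul_div_assoc', div_add_div _ _ hx2.ne' (pow_ne_zero 2 hx2.ne'), div_eq_div_iff (mul_ne_zero hx2.ne' (pow_ne_zero 2 hx2.ne')) (pow_ne_zero 2 hx2.ne')]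
    ring
  rw [intervalIntegral.integral_eq_sub_of_hasDerivAt h]
  · norm_num
    ring
  · exact contB.intervalIntegrable _ _

lemma master {a x u : ℝ} (ha : 0 < a) (ha1 : a < 1) (hx : 0 < x) (hx1 : x ≤ 1)
    (hgw : (1-x^2)/(1+x^2) ≤ u) (hu2 : u^2 ≤ 1) :
    Lo a x ≤ (1/x) * (u / Real.sqrt ((1-a^2)*u^2+a^2) + (x^2-1)/(x^2+1))^2
    ∧ (1/x) * (u / Real.sqrt ((1-a^2)*u^2+a^2) + (x^2-1)/(x^2+1))^2 ≤ 4*x^3/(1+x^2)^2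
    ∧ 0 ≤ Lo a x := by
  set g : ℝ := (1-x^2)/(1+x^2) with hg
  have h1a : 0 < 1 - a^2 := by nlinarith
  have hx2 : (0:ℝ) < 1 + x^2 := by positivity
  have hg0 : 0 ≤ g := by
    apply div_nonneg _ hx2.le
    nlinarith
  have hg1 : g ≤ 1 := by
    rw [div_le_one hx2]; nlinarith
  have hu0 : 0 ≤ u := le_trans hg0 hgw
  have hD : ∀ t : ℝ, 0 < (1-a^2)*t^2 + a^2 := fun t => by positivity
  have hsq : ∀ t : ℝ, 0 < Real.sqrt ((1-a^2)*t^2 + a^2) := fun t => Real.sqrt_pos.2 (hD t)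
  have hrep : ∀ t : ℝ, 0 ≤ t → t / Real.sqrt ((1-a^2)*t^2 + a^2)
      = Real.sqrt (t^2 / ((1-a^2)*t^2 + a^2)) := by
    intro t ht
    rw [Real.sqrt_div (sq_nonneg t), Real.sqrt_sq ht]
  have hmono : g / Real.sqrt ((1-a^2)*g^2 + a^2) ≤ u / Real.sqrt ((1-a^2)*u^2 + a^2) := by
    rw [hrep g hg0, hrep u hu0]
    apply Real.sqrt_le_sqrt
    rw [div_le_div_iff₀ (hD g) (hD u)]
    nlinarith [mul_le_mul hgw hgw hg0 hu0]
  have hle1 : u / Real.sqrt ((1-a^2)*u^2 + a^2) ≤ 1 := by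
    rw [div_le_one (hsq u)]
    calc u = Real.sqrt (u^2) := (Real.sqrt_sq hu0).symm
    _ ≤ _ := Real.sqrt_le_sqrt (by nlinarith)
  have hgle : g ≤ g / Real.sqrt ((1-a^2)*g^2 + a^2) := by
    rw [le_div_iff₀ (hsq g)]
    calc g * Real.sqrt ((1-a^2)*g^2 + a^2) ≤ g * 1 := by
          apply mul_le_mul_of_nonneg_left _ hg0
          apply Real.sqrt_le_one.2
          nlinarith [mul_le_mul hg1 hg1 hg0 zero_le_one]
    _ = g := mul_one g
  have he : (x^2-1)/(x^2+1) = -g := by rw [hg]; ring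
  have hxinv : 0 ≤ 1/x := by positivity
  set F : ℝ := u / Real.sqrt ((1-a^2)*u^2+a^2) + (x^2-1)/(x^2+1) with hF
  set Lv : ℝ := g / Real.sqrt ((1-a^2)*g^2 + a^2) + (x^2-1)/(x^2+1) with hLv
  have hLv0 : 0 ≤ Lv := by rw [hLv, he]; linarith
  have hLF : Lv ≤ F := by rw [hLv, hF]; linarith
  have hF1 : F ≤ 1 - g := by rw [hF, he]; linarith
  have hLo : Lo a x = (1/x) * Lv^2 := rfl
  refine ⟨?_, ?_, ?_⟩
  · rw [hLo]
    apply mul_le_mul_of_nonneg_left _ hxinv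
    exact pow_le_pow_left₀ hLv0 hLF 2
  · have h2 : F^2 ≤ (1-g)^2 := pow_le_pow_left₀ (le_trans hLv0 hLF) hF1 2
    calc (1/x) * F^2 ≤ (1/x) * (1-g)^2 := mul_le_mul_of_nonneg_left h2 hxinv
    _ = 4*x^3/(1+x^2)^2 := by
        rw [hg]; field_simp; ring
  · rw [hLo]; positivity

lemma integrable_of_bound (f : ℝ → ℝ)
    (hf : AEStronglyMeasurable f (volume.restrict (Set.Ioc (0:ℝ) 1)))
    (hb : ∀ x ∈ Set.Ioc (0:ℝ) 1, |f x| ≤ 4*x^3/(1+x^2)^2) :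
    IntervalIntegrable f volume 0 1 := by
  rw [intervalIntegrable_iff_integrableOn_Ioc_of_le zero_le_one]
  have hB : IntegrableOn (fun x : ℝ => 4*x^3/(1+x^2)^2) (Set.Ioc (0:ℝ) 1) volume := by
    have := contB.intervalIntegrable (μ := volume) (0:ℝ) 1
    rwa [intervalIntegrable_iff_integrableOn_Ioc_of_le zero_le_one] at this
  exact hB.mono' hf ((ae_restrict_iff' measurableSet_Ioc).2 (Filter.Eventually.of_forall hb))

lemma measF (a : ℝ) (w₀ : ℝ → ℝ) (hw : Measurable (w₀ : ℝ → ℝ)) :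
    Measurable (fun x => (1/x) * (w₀ x / Real.sqrt ((1 - a^2) * (w₀ x)^2 + a^2)
          + (x^2 - 1) / (x^2 + 1))^2) := by
  have m1 : Measurable fun x : ℝ => 1/x := measurable_const.div measurable_id
  have m2 : Measurable fun x : ℝ => Real.sqrt ((1 - a^2) * (w₀ x)^2 + a^2) :=
    Real.continuous_sqrt.measurable.comp (((hw.pow_const 2).const_mul _).add_const _)
  have m3 : Measurable fun x : ℝ => (x^2 - 1) / (x^2 + 1) :=
    ((measurable_id.pow_const 2).sub_const 1).div ((measurable_id.pow_const 2).add_const 1)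
  exact m1.mul (((hw.div m2).add m3).pow_const 2)

lemma measLo (a : ℝ) : Measurable (Lo a) := by
  unfold Lo
  exact measF a _ (((measurable_const.sub (measurable_id.pow_const 2)).div
    ((measurable_const.add (measurable_id.pow_const 2)))))

lemma loLim {x : ℝ} (hx : 0 < x) (hx1 : x < 1) :
    Filter.Tendsto (fun a => Lo a x) (nhdsWithin 0 (Set.Ioi 0)) (nhds (4*x^3/(1+x^2)^2)) := by
  set g : ℝ := (1-x^2)/(1+x^2) with hg
  have hx2 : (0:ℝ) < 1 + x^2 := by positivity
  have hg0 : 0 < g := by apply div_pos _ hx2; nlinarith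
  have t0 : Filter.Tendsto (fun a : ℝ => (1-a^2)*g^2 + a^2) (nhds 0) (nhds (g^2)) := by
    have h : Continuous (fun a : ℝ => (1-a^2)*g^2 + a^2) := by continuity
    have := h.tendsto 0
    simpa using this
  have t1 : Filter.Tendsto (fun a : ℝ => Real.sqrt ((1-a^2)*g^2 + a^2)) (nhds 0) (nhds g) := by
    have := (Real.continuous_sqrt.tendsto (g^2)).comp t0
    simpa [Function.comp_def, Real.sqrt_sq hg0.le] using this
  have t2 : Filter.Tendsto (fun a : ℝ => g / Real.sqrt ((1-a^2)*g^2 + a^2) + (x^2-1)/(x^2+1))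
      (nhds 0) (nhds (1 + (x^2-1)/(x^2+1))) := by
    have := (tendsto_const_nhds (x := g) (f := nhds (0:ℝ))).div t1 hg0.ne'
    rw [div_self hg0.ne'] at this
    exact this.add tendsto_const_nhds
  have t3 : Filter.Tendsto (fun a : ℝ => Lo a x) (nhds 0)
      (nhds ((1/x) * (1 + (x^2-1)/(x^2+1))^2)) := by
    unfold Lo
    exact (tendsto_const_nhds.mul ((t2.pow 2)))
  have hval : (1/x) * (1 + (x^2-1)/(x^2+1))^2 = 4*x^3/(1+x^2)^2 := by
    field_simp
    ring
  rw [hval] at t3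
  exact t3.mono_left nhdsWithin_le_nhds

/-- Suppose for each `a ∈ (0,1)` a measurable function `w_a : (0,1] → ℝ` satisfies
`(1-x²)/(1+x²) ≤ w_a(x)` and `w_a(x)² ≤ 1 - x^(2/√(1-a²))` on `(0,1]`. Then
`∫₀¹ (1/x)·(w_a(x)/√(Δ_a(w_a(x))) + (x²-1)/(x²+1))² dx → 2·ln 2 - 1` as `a → 0⁺`. -/
theorem stmt_19 (w : ℝ → ℝ → ℝ)
    (hmeas : ∀ a ∈ Set.Ioo (0:ℝ) 1, Measurable (w a))
    (hlow : ∀ a ∈ Set.Ioo (0:ℝ) 1, ∀ x ∈ Set.Ioc (0:ℝ) 1,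
      (1 - x^2) / (1 + x^2) ≤ w a x)
    (hup : ∀ a ∈ Set.Ioo (0:ℝ) 1, ∀ x ∈ Set.Ioc (0:ℝ) 1,
      (w a x)^2 ≤ 1 - x ^ (2 / Real.sqrt (1 - a^2))) :
    Filter.Tendsto
      (fun a : ℝ => ∫ x in (0:ℝ)..1,
        (1/x) * (w a x / Real.sqrt ((1 - a^2) * (w a x)^2 + a^2)
          + (x^2 - 1) / (x^2 + 1))^2)
      (nhdsWithin 0 (Set.Ioi 0)) (nhds (2 * Real.log 2 - 1)) := by
  set F : ℝ → ℝ → ℝ := fun a x =>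
    (1/x) * (w a x / Real.sqrt ((1 - a^2) * (w a x)^2 + a^2)
      + (x^2 - 1) / (x^2 + 1))^2 with hFdef
  have hev : ∀ᶠ a in nhdsWithin (0:ℝ) (Set.Ioi 0), a ∈ Set.Ioo (0:ℝ) 1 :=
    Ioo_mem_nhdsGT_of_mem (by constructor <;> norm_num)
  -- master bounds for every a ∈ Ioo 0 1 and x ∈ Ioc 0 1
  have hmaster : ∀ a ∈ Set.Ioo (0:ℝ) 1, ∀ x ∈ Set.Ioc (0:ℝ) 1,
      Lo a x ≤ F a x ∧ F a x ≤ 4*x^3/(1+x^2)^2 ∧ 0 ≤ Lo a x := by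
    intro a ha x hx
    have hu2 : (w a x)^2 ≤ 1 := by
      have h1 := hup a ha x hx
      have h2 : 0 ≤ x ^ (2 / Real.sqrt (1 - a^2)) := Real.rpow_nonneg hx.1.le _
      linarith
    exact master ha.1 ha.2 hx.1 hx.2 (hlow a ha x hx) hu2
  -- integrability
  have hFint : ∀ a ∈ Set.Ioo (0:ℝ) 1, IntervalIntegrable (F a) volume 0 1 := by
    intro a ha
    apply integrable_of_bound _ ((measF a (w a) (hmeas a ha)).aestronglyMeasurable)
    intro x hx
    obtain ⟨h1, h2, h3⟩ := hmaster a ha x hx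
    rw [abs_of_nonneg (le_trans h3 h1)]
    exact h2
  have hLint : ∀ a : ℝ, a ∈ Set.Ioo (0:ℝ) 1 → IntervalIntegrable (Lo a) volume 0 1 := by
    intro a ha
    apply integrable_of_bound _ ((measLo a).aestronglyMeasurable)
    intro x hx
    obtain ⟨h1, h2, h3⟩ := hmaster a ha x hx
    rw [abs_of_nonneg h3]
    exact le_trans h1 h2
  -- lower integral comparison
  have hcomp : ∀ a ∈ Set.Ioo (0:ℝ) 1,
      (∫ x in (0:ℝ)..1, Lo a x) ≤ ∫ x in (0:ℝ)..1, F a x := by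
    intro a ha
    apply intervalIntegral.integral_mono_on zero_le_one (hLint a ha) (hFint a ha)
    intro x hx
    rcases eq_or_lt_of_le hx.1 with h0 | h0
    · subst h0
      simp [Lo, hFdef]
    · exact (hmaster a ha x ⟨h0, hx.2⟩).1
  -- upper bound by the limit value
  have hub : ∀ a ∈ Set.Ioo (0:ℝ) 1, (∫ x in (0:ℝ)..1, F a x) ≤ 2 * Real.log 2 - 1 := by
    intro a ha
    rw [← intB]
    apply intervalIntegral.integral_mono_on zero_le_one (hFint a ha)
      (contB.intervalIntegrable _ _)
    intro x hx
    rcases eq_or_lt_of_le hx.1 with h0 | h0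
    · subst h0
      simp [hFdef]
    · exact (hmaster a ha x ⟨h0, hx.2⟩).2.1
  -- dominated convergence for the lower family
  have hDCT : Filter.Tendsto (fun a => ∫ x in (0:ℝ)..1, Lo a x)
      (nhdsWithin (0:ℝ) (Set.Ioi 0)) (nhds (∫ x in (0:ℝ)..1, 4*x^3/(1+x^2)^2)) := by
    apply intervalIntegral.tendsto_integral_filter_of_dominated_convergence (μ := volume)
      (bound := fun x => 4*x^3/(1+x^2)^2)
    · exact Filter.Eventually.of_forall fun a => (measLo a).aestronglyMeasurable
    · filter_upwards [hev] with a ha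
      refine Filter.Eventually.of_forall ?_
      intro x hx
      rw [Set.uIoc_of_le (by norm_num : (0:ℝ) ≤ 1)] at hx
      obtain ⟨h1, h2, h3⟩ := hmaster a ha x hx
      rw [Real.norm_eq_abs, abs_of_nonneg h3]
      exact le_trans h1 h2
    · exact contB.intervalIntegrable _ _
    · have hne : ∀ᵐ x : ℝ ∂volume, x ≠ 1 := by
        refine ae_iff.2 ?_
        have hs : {x : ℝ | ¬ x ≠ 1} = {1} := by ext y; simp
        rw [hs]
        exact Real.volume_singleton
      filter_upwards [hne] with x hx1 hx2
      rw [Set.uIoc_of_le (by norm_num : (0:ℝ) ≤ 1)] at hx2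
      exact loLim hx2.1 (lt_of_le_of_ne hx2.2 hx1)
  rw [intB] at hDCT
  refine tendsto_of_tendsto_of_tendsto_of_le_of_le' hDCT tendsto_const_nhds ?_ ?_
  · filter_upwards [hev] with a ha
    exact hcomp a ha
  · filter_upwards [hev] with a ha
    exact hub a ha
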